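/- Suppose Assumptions 1–4 hold and the scale function is specified as s(t) = t or s(t) = exp(t). Then the weighted mean squared prediction error of the MVR solution θ* = (β*,γ*) is bounded by the root mean squared prediction error of OLS: E[(Y−X'β*)²/s(X'γ*)] ≤ E[(Y−X'β_LS)²]^{1/2}, with equality if and only if θ* = θ_LS. -/

import Mathlib

open MeasureTheory Filter

noncomputable section

namespace MVR

/-- Lower endpoint of the scale-function domain: `zero` codes `a = 0`, `negInf` codes `a = -∞`. -/
inductive LB | zero | negInf

/-- The domain `(a, ∞)` of the scale function. -/
def LB.dom : LB → Set ℝ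
  | LB.zero => Set.Ioi 0
  | LB.negInf => Set.univ

/-- The filter "t → a from within the domain". -/
def LB.atLB : LB → Filter ℝ
  | LB.zero => nhdsWithin 0 (Set.Ioi 0)
  | LB.negInf => Filter.atBot

/-- Assumption 1: the scale function `s : (a,∞) → (0,∞)` is three times differentiable,
strictly increasing, convex, with `s(t) → 0` as `t → a` and `s(t) → ∞` as `t → ∞`. -/
structure IsScale (A : LB) (s : ℝ → ℝ) : Prop where
  pos : ∀ t ∈ A.dom, 0 < s t
  smooth : ContDiffOn ℝ 3 s A.dom
  mono : StrictMonoOn s A.dom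
  convex : ConvexOn ℝ A.dom s
  tendsto_lb : Filter.Tendsto s A.atLB (nhds 0)
  tendsto_top : Filter.Tendsto s Filter.atTop Filter.atTop

/-- Euclidean inner product on `ℝ^k`. -/
def mdot {k : ℕ} (x y : Fin k → ℝ) : ℝ := ∑ i, x i * y i

/-- Euclidean norm on `ℝ^k`. -/
def ednorm {k : ℕ} (x : Fin k → ℝ) : ℝ := Real.sqrt (∑ i, (x i) ^ 2)

/-- Euclidean norm on `ℝ^k × ℝ^k`. -/
def pnorm {k : ℕ} (θ : (Fin k → ℝ) × (Fin k → ℝ)) : ℝ :=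
  Real.sqrt (∑ i, (θ.1 i) ^ 2 + ∑ i, (θ.2 i) ^ 2)

/-- The vector `(g, 0, …, 0) ∈ ℝ^k`. -/
def lsγ {k : ℕ} [NeZero k] (g : ℝ) : Fin k → ℝ := fun i => if i = 0 then g else 0

/-- Topological support of a measure: points all of whose neighbourhoods have positive measure. -/
def measSupport {α : Type*} [TopologicalSpace α] [MeasurableSpace α] (μ : Measure α) : Set α :=
  {x | ∀ U ∈ nhds x, μ U ≠ 0}

/-- Standard Gaussian density `φ`. -/
def gaussD (z : ℝ) : ℝ := (Real.sqrt (2 * Real.pi))⁻¹ * Real.exp (-(z ^ 2) / 2)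

/-- The MVR setting: a probability space carrying `(Y, X)` with `X` having intercept `1`,
together with a scale function satisfying Assumption 1. -/
structure Setting (k : ℕ) [NeZero k] (Ω : Type*) [MeasurableSpace Ω] where
  P : Measure Ω
  isProb : IsProbabilityMeasure P
  Y : Ω → ℝ
  X : Ω → Fin k → ℝ
  measY : Measurable Y
  measX : Measurable X
  intercept : ∀ᵐ ω ∂P, X ω 0 = 1
  A : LB
  s : ℝ → ℝ
  scale : IsScale A s

namespace Setting

variable {k : ℕ} [NeZero k] {Ω : Type*} [MeasurableSpace Ω] (S : Setting k Ω)

/-- First derivative of the scale function. -/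
def s1 : ℝ → ℝ := deriv S.s

/-- Second derivative of the scale function. -/
def s2 : ℝ → ℝ := deriv (deriv S.s)

/-- Third derivative of the scale function. -/
def s3 : ℝ → ℝ := deriv (deriv (deriv S.s))

/-- The parameter set `Θ_γ = {γ : P[s(X'γ) > 0] = 1}`. -/
def Tγ : Set (Fin k → ℝ) := {γ | ∀ᵐ ω ∂S.P, 0 < S.s (mdot (S.X ω) γ)}

/-- The parameter space `Θ = ℝ^k × Θ_γ`. -/
def T : Set ((Fin k → ℝ) × (Fin k → ℝ)) := Set.univ ×ˢ S.Tγ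

/-- Standardized residual `e(Y,X,θ) = (Y − X'β)/s(X'γ)`. -/
def e (θ : (Fin k → ℝ) × (Fin k → ℝ)) (ω : Ω) : ℝ :=
  (S.Y ω - mdot (S.X ω) θ.1) / S.s (mdot (S.X ω) θ.2)

/-- The MVR loss `L(X,Y,θ) = (1/2){e(Y,X,θ)² + 1}·s(X'γ)`. -/
def L (θ : (Fin k → ℝ) × (Fin k → ℝ)) (ω : Ω) : ℝ :=
  (1 / 2) * ((S.e θ ω) ^ 2 + 1) * S.s (mdot (S.X ω) θ.2)

/-- The MVR objective `Q(θ) = E[L(X,Y,θ)]`. -/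
def Q (θ : (Fin k → ℝ) × (Fin k → ℝ)) : ℝ := ∫ ω, S.L θ ω ∂S.P

/-- The σ-algebra generated by `X`. -/
def mX : MeasurableSpace Ω := MeasurableSpace.comap S.X inferInstance

/-- Conditional mean function `μ(X) = E[Y | X]` (as a function of `ω`). -/
def condMean : Ω → ℝ := S.P[S.Y | S.mX]

/-- Conditional variance function `σ(X)² = E[(Y − E[Y|X])² | X]` (as a function of `ω`). -/
def condVar : Ω → ℝ := S.P[fun ω => (S.Y ω - S.condMean ω) ^ 2 | S.mX]

/-- Conditional standard deviation `σ(X)`. -/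
def condSD (ω : Ω) : ℝ := Real.sqrt (S.condVar ω)

/-- Assumption 2: `σ(X)²` is bounded away from `0` (almost surely) on the support of `X`. -/
def Assm2 : Prop := ∃ c : ℝ, 0 < c ∧ ∀ᵐ ω ∂S.P, c ≤ S.condVar ω

/-- Assumption 3: the moment conditions. -/
def Assm3 : Prop :=
  Integrable (fun ω => (S.Y ω) ^ 4) S.P ∧
  Integrable (fun ω => (ednorm (S.X ω)) ^ 4) S.P ∧
  ∀ γ ∈ S.Tγ,
    Integrable (fun ω => (ednorm (S.X ω)) ^ 4 * (S.s2 (mdot (S.X ω) γ)) ^ 2) S.P ∧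
    Integrable (fun ω => (ednorm (S.X ω)) ^ 6 * (S.s3 (mdot (S.X ω) γ)) ^ 2) S.P ∧
    Integrable (fun ω =>
      (ednorm (S.X ω)) ^ 6 * (S.s1 (mdot (S.X ω) γ)) ^ 2 * (S.s2 (mdot (S.X ω) γ)) ^ 2) S.P

/-- The matrix `E[XX'/s(X'γ)]`. -/
def M (γ : Fin k → ℝ) : Matrix (Fin k) (Fin k) ℝ :=
  Matrix.of fun i j => ∫ ω, S.X ω i * S.X ω j / S.s (mdot (S.X ω) γ) ∂S.P

/-- Assumption 4: `E[XX'/s(X'γ)]` is nonsingular for all `γ ∈ Θ_γ`. -/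
def Assm4 : Prop := ∀ γ ∈ S.Tγ, (S.M γ).det ≠ 0

/-- The restricted (constant-scale) MVR objective defining OLS. -/
def QLS (β : Fin k → ℝ) (g : ℝ) : ℝ :=
  ∫ ω, (1 / 2) * (((S.Y ω - mdot (S.X ω) β) / S.s g) ^ 2 + 1) * S.s g ∂S.P

/-- `(β, g)` is the OLS solution: it minimizes the constant-scale MVR objective over
`Θ_LS = ℝ^k × {g : s(g) > 0}`. -/
def IsOLS (β : Fin k → ℝ) (g : ℝ) : Prop :=
  0 < S.s g ∧ ∀ β' : Fin k → ℝ, ∀ g' : ℝ, 0 < S.s g' → S.QLS β g ≤ S.QLS β' g'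

/-- `θ` is the unique minimizer of the MVR objective `Q` over `Θ`. -/
def IsMVRmin (θ : (Fin k → ℝ) × (Fin k → ℝ)) : Prop :=
  θ ∈ S.T ∧ ∀ θ' ∈ S.T, θ' ≠ θ → S.Q θ < S.Q θ'

/-- The scale function is specified as `s(t) = t` or `s(t) = exp(t)`. -/
def LinOrExp : Prop := (∀ t, S.s t = t) ∨ (∀ t, S.s t = Real.exp t)

/-- The scaled Gaussian density `f_θ(Y,X) = φ(e(Y,X,θ))/s(X'γ)`. -/
def fdens (θ : (Fin k → ℝ) × (Fin k → ℝ)) (ω : Ω) : ℝ :=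
  gaussD (S.e θ ω) / S.s (mdot (S.X ω) θ.2)

/-- The GLS reference density `f†_β(Y,X) = φ((Y−X'β)/σ(X))/σ(X)`. -/
def fdagger (β : Fin k → ℝ) (ω : Ω) : ℝ :=
  gaussD ((S.Y ω - mdot (S.X ω) β) / S.condSD ω) / S.condSD ω

/-- The infeasible MVR objective written in terms of `μ(X)` and `σ(X)²`. -/
def Qtilde (θ : (Fin k → ℝ) × (Fin k → ℝ)) : ℝ :=
  (1 / 2) * ∫ ω, (((S.condMean ω - mdot (S.X ω) θ.1) / S.s (mdot (S.X ω) θ.2)) ^ 2 + 1) *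
      S.s (mdot (S.X ω) θ.2) ∂S.P +
  (1 / 2) * ∫ ω, S.condVar ω / S.s (mdot (S.X ω) θ.2) ∂S.P

/-- The block matrix `Ψ(θ)` of Lemma 2. -/
def Psi (θ : (Fin k → ℝ) × (Fin k → ℝ)) : Matrix (Fin k ⊕ Fin k) (Fin k ⊕ Fin k) ℝ :=
  Matrix.fromBlocks
    (Matrix.of fun i j => ∫ ω, S.X ω i * S.X ω j / S.s (mdot (S.X ω) θ.2) ∂S.P)
    (Matrix.of fun i j => ∫ ω,
      S.X ω i * S.X ω j * S.s1 (mdot (S.X ω) θ.2) * S.e θ ω / S.s (mdot (S.X ω) θ.2) ∂S.P)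
    (Matrix.of fun i j => ∫ ω,
      S.X ω i * S.X ω j * S.s1 (mdot (S.X ω) θ.2) * S.e θ ω / S.s (mdot (S.X ω) θ.2) ∂S.P)
    (Matrix.of fun i j => ∫ ω,
      S.X ω i * S.X ω j * (S.s1 (mdot (S.X ω) θ.2) * S.e θ ω) ^ 2 / S.s (mdot (S.X ω) θ.2) ∂S.P)

end Setting

end MVR

open MVR MVR.Setting
namespace MVRProof
open MVR MVR.Setting

variable {k : ℕ} [NeZero k] {Ω : Type*} [MeasurableSpace Ω]

lemma meas_mdot (S : Setting k Ω) (γ : Fin k → ℝ) : Measurable fun ω => mdot (S.X ω) γ := by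
  unfold mdot
  exact Finset.measurable_sum _ fun i _ => ((measurable_pi_apply i).comp S.measX).mul_const _

lemma cont_s (S : Setting k Ω) (hs : S.LinOrExp) : Continuous S.s := by
  rcases hs with h | h
  · have : S.s = id := funext h
    rw [this]; exact continuous_id
  · have : S.s = Real.exp := funext h
    rw [this]; exact Real.continuous_exp

lemma s_surj (S : Setting k Ω) (hs : S.LinOrExp) : ∀ t : ℝ, 0 < t → ∃ g, S.s g = t := by
  rcases hs with h | h
  · exact fun t _ => ⟨t, h t⟩
  · exact fun t ht => ⟨Real.log t, (h _).trans (Real.exp_log ht)⟩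

lemma not_ae_false (S : Setting k Ω) (h : ∀ᵐ ω ∂S.P, False) : False := by
  haveI := S.isProb
  exact h.exists.elim fun _ hf => hf

lemma mdot_lsγ (x : Fin k → ℝ) (g : ℝ) : mdot x (lsγ g) = x 0 * g := by
  simp only [mdot, lsγ, mul_ite, mul_zero]
  rw [Finset.sum_ite_eq' Finset.univ 0 (fun i => x i * g)]
  simp

lemma integrable_res_sq (S : Setting k Ω) (h3 : S.Assm3) (β : Fin k → ℝ) :
    Integrable (fun ω => (S.Y ω - mdot (S.X ω) β) ^ 2) S.P := by
  haveI := S.isProb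
  set C := ∑ i, (β i) ^ 2 with hC
  have hC0 : 0 ≤ C := Finset.sum_nonneg fun i _ => sq_nonneg _
  have hbound : Integrable (fun ω => 2 * ((S.Y ω) ^ 4 + 1) + 2 * C * ((ednorm (S.X ω)) ^ 4 + 1)) S.P := by
    exact ((h3.1.add (integrable_const 1)).const_mul 2).add
      (((h3.2.1.add (integrable_const 1)).const_mul (2 * C)).congr (by
        filter_upwards with ω
        simp only [Pi.add_apply]
        try ring))
  refine hbound.mono' ?_ ?_
  · exact ((S.measY.sub (meas_mdot S β)).pow_const 2).aestronglyMeasurable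
  · filter_upwards with ω
    rw [Real.norm_eq_abs, abs_of_nonneg (sq_nonneg _)]
    set y := S.Y ω
    set t := mdot (S.X ω) β with htdef
    set s := ∑ i, (S.X ω i) ^ 2 with hsdef
    have hs0 : 0 ≤ s := Finset.sum_nonneg fun i _ => sq_nonneg _
    have hcs : t ^ 2 ≤ s * C := by
      rw [htdef, hsdef, hC]
      exact Finset.sum_mul_sq_le_sq_mul_sq Finset.univ _ _
    have hed : (ednorm (S.X ω)) ^ 4 = s ^ 2 := by
      rw [ednorm, ← hsdef, show (4:ℕ) = 2 * 2 from rfl, pow_mul, Real.sq_sqrt hs0]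
    rw [hed]
    nlinarith [sq_nonneg (y ^ 2 - 1), sq_nonneg (s - 1), sq_nonneg (y + t), sq_nonneg (y - t),
      mul_nonneg hs0 hC0, mul_le_mul_of_nonneg_right (sq_nonneg s) hC0]

lemma QLS_eq (S : Setting k Ω) (h3 : S.Assm3) (β : Fin k → ℝ) (g : ℝ) (hg : S.s g ≠ 0) :
    S.QLS β g = (∫ ω, (S.Y ω - mdot (S.X ω) β) ^ 2 ∂S.P) / (2 * S.s g) + S.s g / 2 := by
  haveI := S.isProb
  have hint := integrable_res_sq S h3 β
  have hptw : ∀ ω, (1/2 : ℝ) * (((S.Y ω - mdot (S.X ω) β) / S.s g) ^ 2 + 1) * S.s g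
      = (S.Y ω - mdot (S.X ω) β) ^ 2 * (2 * S.s g)⁻¹ + S.s g / 2 := by
    intro ω; field_simp
  unfold Setting.QLS
  simp_rw [hptw]
  rw [integral_add (hint.mul_const _) (integrable_const _), MeasureTheory.integral_mul_const, integral_const]
  simp [div_eq_mul_inv]

lemma crux (S : Setting k Ω) (hs : S.LinOrExp) (θ : (Fin k → ℝ) × (Fin k → ℝ))
    (hstar : S.IsMVRmin θ) :
    S.Q θ = ∫ ω, (S.Y ω - mdot (S.X ω) θ.1) ^ 2 / S.s (mdot (S.X ω) θ.2) ∂S.P := by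
  haveI := S.isProb
  have hγ : ∀ᵐ ω ∂S.P, 0 < S.s (mdot (S.X ω) θ.2) := hstar.1.2
  -- rescaled parameters
  have key : ∀ c : ℝ, 0 < c → c ≠ 1 → ∃ γc : Fin k → ℝ, γc ≠ θ.2 ∧
      (θ.1, γc) ∈ S.T ∧
      (∀ᵐ ω ∂S.P, S.s (mdot (S.X ω) γc) = c * S.s (mdot (S.X ω) θ.2)) := by
    intro c hc hc1
    rcases hs with hid | hexp
    · have hmdot : ∀ x : Fin k → ℝ, mdot x (c • θ.2) = c * mdot x θ.2 := by
        intro x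
        simp only [mdot, Pi.smul_apply, smul_eq_mul, Finset.mul_sum]
        exact Finset.sum_congr rfl fun i _ => by ring
      refine ⟨c • θ.2, ?_, ⟨Set.mem_univ _, ?_⟩, ?_⟩
      · intro hEq
        have hz : θ.2 = 0 := by
          funext i
          have h1 := congrFun hEq i
          simp only [Pi.smul_apply, smul_eq_mul] at h1
          have h2 : (c - 1) * θ.2 i = 0 := by linarith
          rcases mul_eq_zero.mp h2 with h | h
          · exact absurd (by linarith) hc1
          · exact h
        apply not_ae_false S
        filter_upwards [hγ] with ω h
        rw [hz] at h
        simp [hid, mdot] at h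
      · show ∀ᵐ ω ∂S.P, 0 < S.s (mdot (S.X ω) (c • θ.2))
        filter_upwards [hγ] with ω h
        rw [hid, hmdot]
        rw [hid] at h
        exact mul_pos hc h
      · filter_upwards with ω
        rw [hid, hid, hmdot]
    · have hmdot : ∀ x : Fin k → ℝ, mdot x (θ.2 + lsγ (Real.log c))
          = mdot x θ.2 + x 0 * Real.log c := by
        intro x
        have h1 : mdot x (θ.2 + lsγ (Real.log c))
            = mdot x θ.2 + mdot x (lsγ (Real.log c)) := by
          simp only [mdot, Pi.add_apply, mul_add, Finset.sum_add_distrib]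
        rw [h1, mdot_lsγ]
      refine ⟨θ.2 + lsγ (Real.log c), ?_, ⟨Set.mem_univ _, ?_⟩, ?_⟩
      · intro hEq
        have h1 := congrFun hEq 0
        simp only [Pi.add_apply, lsγ, if_true, if_pos] at h1
        have h2 : Real.log c = 0 := by linarith
        have : c = 1 := by rw [← Real.exp_log hc, h2, Real.exp_zero]
        exact hc1 this
      · show ∀ᵐ ω ∂S.P, 0 < S.s (mdot (S.X ω) (θ.2 + lsγ (Real.log c)))
        filter_upwards with ω
        rw [hexp]
        exact Real.exp_pos _
      · filter_upwards [S.intercept] with ω h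
        rw [hexp, hexp, hmdot, h, one_mul, Real.exp_add, Real.exp_log hc]
        ring
  -- decomposition of the loss
  have Ldec : ∀ c : ℝ, 0 < c → ∀ γc : Fin k → ℝ,
      (∀ᵐ ω ∂S.P, S.s (mdot (S.X ω) γc) = c * S.s (mdot (S.X ω) θ.2)) →
      (fun ω => S.L (θ.1, γc) ω) =ᵐ[S.P] fun ω =>
        (1 / (2 * c)) * ((S.Y ω - mdot (S.X ω) θ.1) ^ 2 / S.s (mdot (S.X ω) θ.2))
          + (c / 2) * S.s (mdot (S.X ω) θ.2) := by
    intro c hc γc hγc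
    filter_upwards [hγ, hγc] with ω hv0 heq
    have hLval : S.L (θ.1, γc) ω = (1/2 : ℝ) *
        (((S.Y ω - mdot (S.X ω) θ.1) / S.s (mdot (S.X ω) γc)) ^ 2 + 1)
        * S.s (mdot (S.X ω) γc) := rfl
    rw [hLval, heq]
    field_simp
  have humeas : AEStronglyMeasurable
      (fun ω => (S.Y ω - mdot (S.X ω) θ.1) ^ 2 / S.s (mdot (S.X ω) θ.2)) S.P :=
    (((S.measY.sub (meas_mdot S θ.1)).pow_const 2).div
      ((cont_s S hs).measurable.comp (meas_mdot S θ.2))).aestronglyMeasurable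
  have hae1 : ∀ᵐ ω ∂S.P, S.s (mdot (S.X ω) θ.2) = 1 * S.s (mdot (S.X ω) θ.2) :=
    Filter.Eventually.of_forall fun ω => (one_mul _).symm
  by_cases hint : Integrable (fun ω =>
      (S.Y ω - mdot (S.X ω) θ.1) ^ 2 / S.s (mdot (S.X ω) θ.2)
        + S.s (mdot (S.X ω) θ.2)) S.P
  · -- integrable case
    have hu_nn : ∀ᵐ ω ∂S.P, 0 ≤ (S.Y ω - mdot (S.X ω) θ.1) ^ 2 / S.s (mdot (S.X ω) θ.2) := by
      filter_upwards [hγ] with ω h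
      exact div_nonneg (sq_nonneg _) h.le
    have hv_nn : ∀ᵐ ω ∂S.P, 0 ≤ S.s (mdot (S.X ω) θ.2) := by
      filter_upwards [hγ] with ω h; exact h.le
    have hu_int : Integrable
        (fun ω => (S.Y ω - mdot (S.X ω) θ.1) ^ 2 / S.s (mdot (S.X ω) θ.2)) S.P := by
      refine hint.mono' humeas ?_
      filter_upwards [hu_nn, hv_nn] with ω h1 h2
      rw [Real.norm_eq_abs, abs_of_nonneg h1]
      linarith
    have hv_int : Integrable (fun ω => S.s (mdot (S.X ω) θ.2)) S.P := by
      refine hint.mono' ((cont_s S hs).measurable.comp (meas_mdot S θ.2)).aestronglyMeasurable ?_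
      filter_upwards [hu_nn, hv_nn] with ω h1 h2
      rw [Real.norm_eq_abs, abs_of_nonneg h2]
      linarith
    set A := ∫ ω, (S.Y ω - mdot (S.X ω) θ.1) ^ 2 / S.s (mdot (S.X ω) θ.2) ∂S.P with hAdef
    set B := ∫ ω, S.s (mdot (S.X ω) θ.2) ∂S.P with hBdef
    have hQc : ∀ c : ℝ, 0 < c → ∀ γc : Fin k → ℝ,
        (∀ᵐ ω ∂S.P, S.s (mdot (S.X ω) γc) = c * S.s (mdot (S.X ω) θ.2)) →
        S.Q (θ.1, γc) = (1 / (2 * c)) * A + (c / 2) * B := by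
      intro c hc γc hγc
      show (∫ ω, S.L (θ.1, γc) ω ∂S.P) = _
      rw [integral_congr_ae (Ldec c hc γc hγc),
        integral_add (hu_int.const_mul _) (hv_int.const_mul _),
        MeasureTheory.integral_const_mul, MeasureTheory.integral_const_mul, ← hAdef, ← hBdef]
    have hQ1 : S.Q θ = (1/2) * A + (1/2) * B := by
      have h := hQc 1 one_pos θ.2 hae1
      simp only [Prod.mk.eta] at h
      rw [h]; norm_num
    have hB0 : 0 ≤ B := integral_nonneg_of_ae hv_nn
    have hBpos : 0 < B := by
      rcases hB0.lt_or_eq with h | h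
      · exact h
      exfalso
      have hv0 : (fun ω => S.s (mdot (S.X ω) θ.2)) =ᵐ[S.P] 0 :=
        (integral_eq_zero_iff_of_nonneg_ae hv_nn hv_int).mp h.symm
      apply not_ae_false S
      filter_upwards [hγ, hv0] with ω h1 h2
      simp only [Pi.zero_apply] at h2
      rw [h2] at h1
      exact lt_irrefl 0 h1
    have hA0 : 0 ≤ A := integral_nonneg_of_ae hu_nn
    have hApos : 0 < A := by
      rcases hA0.lt_or_eq with h | h
      · exact h
      exfalso
      obtain ⟨γc, hne, hmemc, haec⟩ := key (1/2) (by norm_num) (by norm_num)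
      have hlt := hstar.2 _ hmemc (fun hh => hne (congrArg Prod.snd hh))
      rw [hQ1, hQc (1/2) (by norm_num) γc haec, ← h] at hlt
      norm_num at hlt
      linarith
    have hAB : A = B := by
      set sa := Real.sqrt A with hsadef
      set sb := Real.sqrt B with hsbdef
      have hsa : 0 < sa := Real.sqrt_pos.mpr hApos
      have hsb : 0 < sb := Real.sqrt_pos.mpr hBpos
      have ha : A = sa ^ 2 := (Real.sq_sqrt hA0).symm
      have hb : B = sb ^ 2 := (Real.sq_sqrt hB0).symm
      by_cases hc1 : sa / sb = 1
      · rw [div_eq_one_iff_eq hsb.ne'] at hc1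
        rw [ha, hb, hc1]
      · obtain ⟨γc, hne, hmemc, haec⟩ := key (sa / sb) (div_pos hsa hsb) hc1
        have hlt := hstar.2 _ hmemc (fun hh => hne (congrArg Prod.snd hh))
        rw [hQ1, hQc (sa / sb) (div_pos hsa hsb) γc haec] at hlt
        have hval : (1 / (2 * (sa / sb))) * A + ((sa / sb) / 2) * B = sa * sb := by
          rw [ha, hb]
          field_simp
          ring
        rw [hval] at hlt
        nlinarith [sq_nonneg (sa - sb)]
    show S.Q θ = A
    rw [hQ1, ← hAB]
    ring
  · -- non-integrable case: contradiction
    exfalso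
    have hnotL : ∀ c : ℝ, 0 < c → ∀ γc : Fin k → ℝ,
        (∀ᵐ ω ∂S.P, S.s (mdot (S.X ω) γc) = c * S.s (mdot (S.X ω) θ.2)) →
        ¬ Integrable (fun ω => S.L (θ.1, γc) ω) S.P := by
      intro c hc γc hγc hL
      apply hint
      have hL' : Integrable (fun ω =>
          (1 / (2 * c)) * ((S.Y ω - mdot (S.X ω) θ.1) ^ 2 / S.s (mdot (S.X ω) θ.2))
            + (c / 2) * S.s (mdot (S.X ω) θ.2)) S.P :=
        (integrable_congr (Ldec c hc γc hγc)).mp hL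
      have hu_nn : ∀ᵐ ω ∂S.P, 0 ≤ (S.Y ω - mdot (S.X ω) θ.1) ^ 2 / S.s (mdot (S.X ω) θ.2) := by
        filter_upwards [hγ] with ω h
        exact div_nonneg (sq_nonneg _) h.le
      have hv_nn : ∀ᵐ ω ∂S.P, 0 ≤ S.s (mdot (S.X ω) θ.2) := by
        filter_upwards [hγ] with ω h; exact h.le
      have hu_int : Integrable
          (fun ω => (S.Y ω - mdot (S.X ω) θ.1) ^ 2 / S.s (mdot (S.X ω) θ.2)) S.P := by
        refine (hL'.const_mul (2 * c)).mono' humeas ?_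
        filter_upwards [hu_nn, hv_nn] with ω h1 h2
        rw [Real.norm_eq_abs, abs_of_nonneg h1]
        have hc' : (0:ℝ) < 2 * c := by linarith
        rw [mul_add, ← mul_assoc]
        have e1 : (2 * c) * (1 / (2 * c)) = 1 := by field_simp
        rw [e1, one_mul]
        have h3 : 0 ≤ 2 * c * (c / 2 * S.s (mdot (S.X ω) θ.2)) := by positivity
        linarith
      have hv_int : Integrable (fun ω => S.s (mdot (S.X ω) θ.2)) S.P := by
        refine (hL'.const_mul (2 / c)).mono'
          ((cont_s S hs).measurable.comp (meas_mdot S θ.2)).aestronglyMeasurable ?_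
        filter_upwards [hu_nn, hv_nn] with ω h1 h2
        rw [Real.norm_eq_abs, abs_of_nonneg h2]
        have h4 : 0 ≤ (1 / (2 * c)) * ((S.Y ω - mdot (S.X ω) θ.1) ^ 2 / S.s (mdot (S.X ω) θ.2)) :=
          mul_nonneg (by positivity) h1
        have h5 : (2 / c) * (c / 2 * S.s (mdot (S.X ω) θ.2)) = S.s (mdot (S.X ω) θ.2) := by
          field_simp [hc.ne']
        calc S.s (mdot (S.X ω) θ.2) = (2 / c) * (c / 2 * S.s (mdot (S.X ω) θ.2)) := h5.symm
          _ ≤ (2 / c) * ((1 / (2 * c)) * ((S.Y ω - mdot (S.X ω) θ.1) ^ 2 / S.s (mdot (S.X ω) θ.2))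
              + c / 2 * S.s (mdot (S.X ω) θ.2)) := by
            apply mul_le_mul_of_nonneg_left (by linarith) (by positivity)
      exact hu_int.add hv_int
    have h1 : ¬ Integrable (fun ω => S.L θ ω) S.P := by
      have := hnotL 1 one_pos θ.2 hae1
      simpa only [Prod.mk.eta] using this
    obtain ⟨γ2, hne2, hmem2, hae2⟩ := key 2 two_pos (by norm_num)
    have h2 : ¬ Integrable (fun ω => S.L (θ.1, γ2) ω) S.P := hnotL 2 two_pos γ2 hae2
    have q1 : S.Q θ = 0 := integral_undef h1
    have q2 : S.Q (θ.1, γ2) = 0 := integral_undef h2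
    have hlt := hstar.2 (θ.1, γ2) hmem2 (fun hh => hne2 (congrArg Prod.snd hh))
    rw [q1, q2] at hlt
    exact lt_irrefl 0 hlt

end MVRProof

/-- Corollary 1: for the linear or exponential scale specification, the weighted mean squared
MVR prediction error is bounded by the OLS root mean squared prediction error. -/
theorem stmt_5 {k : ℕ} [NeZero k] {Ω : Type*} [MeasurableSpace Ω] (S : MVR.Setting k Ω)
    (h2 : S.Assm2) (h3 : S.Assm3) (h4 : S.Assm4) (hs : S.LinOrExp)
    (θstar : (Fin k → ℝ) × (Fin k → ℝ)) (hstar : S.IsMVRmin θstar)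
    (βLS : Fin k → ℝ) (gLS : ℝ) (hLS : S.IsOLS βLS gLS)
    (hmem : (βLS, lsγ gLS) ∈ S.T) :
    (∫ ω, (S.Y ω - mdot (S.X ω) θstar.1) ^ 2 / S.s (mdot (S.X ω) θstar.2) ∂S.P ≤
      Real.sqrt (∫ ω, (S.Y ω - mdot (S.X ω) βLS) ^ 2 ∂S.P)) ∧
    ((∫ ω, (S.Y ω - mdot (S.X ω) θstar.1) ^ 2 / S.s (mdot (S.X ω) θstar.2) ∂S.P =
      Real.sqrt (∫ ω, (S.Y ω - mdot (S.X ω) βLS) ^ 2 ∂S.P)) ↔ θstar = (βLS, lsγ gLS)) := by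
  haveI := S.isProb
  have hsg : 0 < S.s gLS := hLS.1
  set V := ∫ ω, (S.Y ω - mdot (S.X ω) βLS) ^ 2 ∂S.P with hVdef
  have key1 : ∀ g : ℝ, S.s g ≠ 0 → S.QLS βLS g = V / (2 * S.s g) + S.s g / 2 := by
    intro g hg
    rw [MVRProof.QLS_eq S h3 βLS g hg, ← hVdef]
  have hV0 : 0 ≤ V := by
    rw [hVdef]; exact integral_nonneg fun ω => sq_nonneg _
  have hVpos : 0 < V := by
    rcases hV0.lt_or_eq with h | h
    · exact h
    exfalso
    obtain ⟨g', hg'⟩ := MVRProof.s_surj S hs (S.s gLS / 2) (by linarith)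
    have hle := hLS.2 βLS g' (by rw [hg']; linarith)
    rw [key1 gLS hsg.ne', key1 g' (by rw [hg']; linarith), hg', ← h] at hle
    norm_num at hle
    linarith
  have hsV : 0 < Real.sqrt V := Real.sqrt_pos.mpr hVpos
  have hsV2 : Real.sqrt V ^ 2 = V := Real.sq_sqrt hV0
  have hQLSval : S.QLS βLS gLS = Real.sqrt V := by
    apply le_antisymm
    · obtain ⟨g', hg'⟩ := MVRProof.s_surj S hs (Real.sqrt V) hsV
      have hle := hLS.2 βLS g' (by rw [hg']; exact hsV)
      rw [key1 g' (by rw [hg']; exact hsV.ne'), hg'] at hle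
      have heq : V / (2 * Real.sqrt V) + Real.sqrt V / 2 = Real.sqrt V := by
        rw [← hsV2]
        field_simp
        rw [Real.sqrt_sq hsV.le]; ring
      rw [heq] at hle
      exact hle
    · rw [key1 gLS hsg.ne']
      rw [show V / (2 * S.s gLS) + S.s gLS / 2 = (V + S.s gLS ^ 2) / (2 * S.s gLS) by
        field_simp]
      rw [le_div_iff₀ (by positivity)]
      nlinarith [sq_nonneg (Real.sqrt V - S.s gLS)]
  have hQth : S.Q (βLS, lsγ gLS) = Real.sqrt V := by
    rw [← hQLSval]
    show (∫ ω, S.L (βLS, lsγ gLS) ω ∂S.P) = _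
    unfold Setting.QLS
    apply integral_congr_ae
    filter_upwards [S.intercept] with ω h
    show (1/2 : ℝ) * (((S.Y ω - mdot (S.X ω) βLS) / S.s (mdot (S.X ω) (lsγ gLS))) ^ 2 + 1)
        * S.s (mdot (S.X ω) (lsγ gLS)) = _
    rw [MVRProof.mdot_lsγ, h, one_mul]
  have hQA := MVRProof.crux S hs θstar hstar
  have hle : S.Q θstar ≤ S.Q (βLS, lsγ gLS) := by
    by_cases h : (βLS, lsγ gLS) = θstar
    · rw [h]
    · exact (hstar.2 _ hmem h).le
  refine ⟨?_, ?_, ?_⟩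
  · rw [← hQA, ← hQth]
    exact hle
  · intro heq
    by_contra hne
    have hlt := hstar.2 _ hmem (fun h => hne h.symm)
    rw [hQth] at hlt
    rw [← hQA] at heq
    exact absurd heq (ne_of_lt hlt)
  · intro heq
    rw [← hQA, heq]
    exact hQth
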